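/- arXiv:1407.1338 — 8 statements merged into one kernel-verified Lean document; each statement's English description precedes it below -/
import Mathlib

section
/- A k × ℓ row-stochastic matrix Q satisfies the ε-local differential privacy constraints Q(y|x) ≤ e^ε Q(y|x') for all x, x', y if and only if Q can be written as Q = S·Θ where S is a k × ℓ matrix with all entries in the interval [1, e^ε] and Θ = diag(θ₁,...,θ_ℓ) with nonnegative diagonal entries. -/
open Real Finset

/-- A `k × ℓ` row-stochastic matrix `Q` is ε-locally differentially private iff
`Q = S·Θ` with `S` having entries in `[1, e^ε]` and `Θ = diag(θ)` with `θ ≥ 0`. -/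
theorem ldp_iff_staircase_decomposition
    (k l : ℕ) (ε : ℝ) (hε : 0 ≤ ε) (Q : Fin k → Fin l → ℝ)
    (hQnonneg : ∀ i j, 0 ≤ Q i j)
    (hQrow : ∀ i, ∑ j, Q i j = 1) :
    (∀ i i' : Fin k, ∀ j : Fin l, Q i j ≤ Real.exp ε * Q i' j) ↔
      ∃ (S : Fin k → Fin l → ℝ) (θ : Fin l → ℝ),
        (∀ i j, 1 ≤ S i j ∧ S i j ≤ Real.exp ε) ∧
        (∀ j, 0 ≤ θ j) ∧
        (∀ i j, Q i j = S i j * θ j) := by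
  have h1 : (1 : ℝ) ≤ Real.exp ε := by
    simpa using Real.exp_le_exp.2 hε
  constructor
  · intro h
    rcases Nat.eq_zero_or_pos k with hk | hk
    · subst hk
      exact ⟨fun i _ => i.elim0, fun _ => 0, fun i => i.elim0, fun _ => le_refl 0,
        fun i => i.elim0⟩
    have : Nonempty (Fin k) := ⟨⟨0, hk⟩⟩
    set θ : Fin l → ℝ := fun j => ⨅ i, Q i j with hθ
    have hθle : ∀ i j, θ j ≤ Q i j := fun i j =>
      ciInf_le (Set.Finite.bddBelow (Set.finite_range _)) i
    have hθnn : ∀ j, 0 ≤ θ j := fun j =>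
      le_ciInf (fun i => hQnonneg i j)
    have hQleθ : ∀ i j, Q i j ≤ Real.exp ε * θ j := by
      intro i j
      obtain ⟨i₀, hi₀⟩ := exists_eq_ciInf_of_finite (f := fun i => Q i j)
      have hi₀' : Q i₀ j = θ j := hi₀
      calc Q i j ≤ Real.exp ε * Q i₀ j := h i i₀ j
        _ = Real.exp ε * θ j := by rw [hi₀']
    refine ⟨fun i j => if θ j = 0 then 1 else Q i j / θ j, θ, ?_, hθnn, ?_⟩
    · intro i j
      by_cases h0 : θ j = 0
      · simp [h0, h1]
      · have hpos : 0 < θ j := lt_of_le_of_ne (hθnn j) (Ne.symm h0)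
        simp only [h0, if_false]
        constructor
        · rw [le_div_iff₀ hpos]; simpa using hθle i j
        · rw [div_le_iff₀ hpos]; exact hQleθ i j
    · intro i j
      by_cases h0 : θ j = 0
      · have := hQleθ i j
        rw [h0] at this
        simp only [mul_zero] at this
        have : Q i j = 0 := le_antisymm this (hQnonneg i j)
        simp [h0, this]
      · simp only [if_neg h0, div_mul_cancel₀ _ h0]
  · rintro ⟨S, θ, hS, hθ, hQ⟩ i i' j
    rw [hQ i j, hQ i' j]
    calc S i j * θ j ≤ Real.exp ε * θ j :=
          mul_le_mul_of_nonneg_right (hS i j).2 (hθ j)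
      _ ≤ Real.exp ε * (S i' j * θ j) := by
          rw [← mul_assoc]
          exact mul_le_mul_of_nonneg_right
            (le_mul_of_one_le_right (Real.exp_pos ε).le (hS i' j).1) (hθ j)
end

section
/- Any utility function of the form U(Q) = Σ_{z} μ(Q_z), where μ: ℝ^k → ℝ is sublinear (positively homogeneous and subadditive) and Q_z denotes the column of Q indexed by output z, satisfies the data processing inequality: for any row-stochastic matrices Q (k × ℓ) and W (ℓ × m), U(Q·W) ≤ U(Q). -/
open Real Finset

/-- Utilities of the form `U(Q) = Σ_z μ(Q_z)` with `μ` sublinear obey the data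
processing inequality: `U(Q·W) ≤ U(Q)` for row-stochastic `Q`, `W`. -/
theorem sublinear_utility_data_processing
    (k l m : ℕ) (μ : (Fin k → ℝ) → ℝ)
    (hhom : ∀ (γ : ℝ), 0 ≤ γ → ∀ z : Fin k → ℝ, μ (γ • z) = γ * μ z)
    (hsub : ∀ z₁ z₂ : Fin k → ℝ, μ (z₁ + z₂) ≤ μ z₁ + μ z₂)
    (Q : Fin k → Fin l → ℝ) (W : Fin l → Fin m → ℝ)
    (hQnonneg : ∀ i j, 0 ≤ Q i j) (hQrow : ∀ i, ∑ j, Q i j = 1)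
    (hWnonneg : ∀ j z, 0 ≤ W j z) (hWrow : ∀ j, ∑ z, W j z = 1) :
    ∑ z, μ (fun i => ∑ j, Q i j * W j z) ≤ ∑ j, μ (fun i => Q i j) := by
  have hzero : μ 0 = 0 := by
    have := hhom 0 le_rfl 0
    simpa using this
  calc ∑ z, μ (fun i => ∑ j, Q i j * W j z)
      = ∑ z, μ (∑ j, W j z • (fun i => Q i j)) := by
        refine Finset.sum_congr rfl fun z _ => ?_
        congr 1
        funext i
        simp [Finset.sum_apply, mul_comm]
    _ ≤ ∑ z, ∑ j, μ (W j z • (fun i => Q i j)) := by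
        refine Finset.sum_le_sum fun z _ => ?_
        exact Finset.le_sum_of_subadditive μ hzero.le hsub _ _
    _ = ∑ z, ∑ j, W j z * μ (fun i => Q i j) := by
        refine Finset.sum_congr rfl fun z _ => Finset.sum_congr rfl fun j _ => ?_
        exact hhom _ (hWnonneg j z) _
    _ = ∑ j, μ (fun i => Q i j) := by
        rw [Finset.sum_comm]
        refine Finset.sum_congr rfl fun j _ => ?_
        rw [← Finset.sum_mul, hWrow, one_mul]
end

section
/- For any ε ≥ 0, any ε-locally differentially private mechanism Q from a finite set X to a finite set Y, and any pair of probability distributions P₀, P₁ on X, the induced output distributions M₀, M₁ (where Mᵥ(y) = Σ_x Q(y|x)Pᵥ(x)) satisfy ‖M₀ − M₁‖_TV ≤ ((e^ε − 1)/(e^ε + 1)) · ‖P₀ − P₁‖_TV. -/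
open Real Finset

/-- Under any ε-locally differentially private mechanism, the total variation
distance of the induced marginals contracts by a factor `(e^ε−1)/(e^ε+1)`. -/
theorem ldp_tv_contraction
    {X Y : Type*} [Fintype X] [Fintype Y]
    (ε : ℝ) (hε : 0 ≤ ε) (Q : X → Y → ℝ)
    (hQnonneg : ∀ x y, 0 ≤ Q x y) (hQrow : ∀ x, ∑ y, Q x y = 1)
    (hLDP : ∀ x x' : X, ∀ y : Y, Q x y ≤ Real.exp ε * Q x' y)
    (P₀ P₁ : X → ℝ)
    (hP₀ : ∀ x, 0 ≤ P₀ x) (hP₁ : ∀ x, 0 ≤ P₁ x)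
    (hP₀sum : ∑ x, P₀ x = 1) (hP₁sum : ∑ x, P₁ x = 1) :
    (1/2) * ∑ y, |(∑ x, Q x y * P₀ x) - (∑ x, Q x y * P₁ x)| ≤
      ((Real.exp ε - 1) / (Real.exp ε + 1)) * ((1/2) * ∑ x, |P₀ x - P₁ x|) := by
  set E := Real.exp ε with hEdef
  have hE1 : 1 ≤ E := Real.one_le_exp hε
  set k := (E - 1) / (E + 1) with hkdef
  have hEpos : (0:ℝ) < E + 1 := by linarith
  have hk0 : 0 ≤ k := div_nonneg (by linarith) (by linarith)
  have hk1 : k < 1 := by rw [hkdef, div_lt_one hEpos]; linarith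
  have hkE : (1 - k) * E = 1 + k := by
    field_simp [hkdef]
    have h : k * (E + 1) = E - 1 := by rw [hkdef]; exact div_mul_cancel₀ (E - 1) hEpos.ne'
    linarith
  -- pointwise bound
  have hkey : ∀ x x' y, |Q x y - Q x' y| ≤ k * (Q x y + Q x' y) := by
    intro x x' y
    have h1 := hLDP x x' y
    have h2 := hLDP x' x y
    have ha := hQnonneg x y
    have hb := hQnonneg x' y
    have h1k : 0 ≤ 1 - k := by linarith
    rw [abs_le]
    constructor
    · have := mul_le_mul_of_nonneg_left h2 h1k
      nlinarith [hkE]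
    · have := mul_le_mul_of_nonneg_left h1 h1k
      nlinarith [hkE]
  have hrow : ∀ x x' : X, ∑ y, |Q x y - Q x' y| ≤ 2 * k := by
    intro x x'
    calc ∑ y, |Q x y - Q x' y| ≤ ∑ y, k * (Q x y + Q x' y) :=
          Finset.sum_le_sum (fun y _ => hkey x x' y)
      _ = 2 * k := by
          rw [← Finset.mul_sum, Finset.sum_add_distrib, hQrow, hQrow]; ring
  set f : X → ℝ := fun x => P₀ x - P₁ x with hfdef
  set s : ℝ := (1/2) * ∑ x, |f x| with hsdef
  have hsum0 : ∑ x, f x = 0 := by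
    simp [hfdef, Finset.sum_sub_distrib, hP₀sum, hP₁sum]
  set fp : X → ℝ := fun x => max (f x) 0 with hfpdef
  set fm : X → ℝ := fun x => max (-f x) 0 with hfmdef
  have hfpm : ∀ x, f x = fp x - fm x := by
    intro x; simp [hfpdef, hfmdef, max_def]; split_ifs <;> linarith
  have habs : ∀ x, |f x| = fp x + fm x := by
    intro x; rcases abs_cases (f x) with ⟨h, h'⟩ | ⟨h, h'⟩ <;>
      simp [hfpdef, hfmdef, max_def] <;> split_ifs <;> linarith
  have hfpnn : ∀ x, 0 ≤ fp x := fun x => le_max_right _ _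
  have hfmnn : ∀ x, 0 ≤ fm x := fun x => le_max_right _ _
  have habs_sum : ∑ x, |f x| = (∑ x, fp x) + (∑ x, fm x) := by
    rw [← Finset.sum_add_distrib]
    exact Finset.sum_congr rfl (fun x _ => habs x)
  have hpm_sum : (∑ x, fp x) - (∑ x, fm x) = 0 := by
    rw [← Finset.sum_sub_distrib, ← hsum0]
    exact Finset.sum_congr rfl (fun x _ => (hfpm x).symm)
  have hsumfp : ∑ x, fp x = s := by rw [hsdef]; linarith
  have hsumfm : ∑ x, fm x = s := by rw [hsdef]; linarith
  have hsnn : 0 ≤ s := by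
    rw [hsdef]; positivity
  have hgoal_eq : ∀ y, (∑ x, Q x y * P₀ x) - (∑ x, Q x y * P₁ x) = ∑ x, Q x y * f x := by
    intro y
    rw [← Finset.sum_sub_distrib]
    exact Finset.sum_congr rfl (fun x _ => by rw [hfdef]; ring)
  -- key identity
  have hid : ∀ y, s * (∑ x, Q x y * f x)
      = ∑ x, ∑ x', fp x * fm x' * (Q x y - Q x' y) := by
    intro y
    have step : ∑ x, ∑ x', fp x * fm x' * (Q x y - Q x' y)
        = (∑ x, fp x * Q x y) * (∑ x', fm x')
          - (∑ x, fp x) * (∑ x', fm x' * Q x' y) := by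
      calc ∑ x, ∑ x', fp x * fm x' * (Q x y - Q x' y)
          = ∑ x, ((fp x * Q x y) * (∑ x', fm x')
              - fp x * (∑ x', fm x' * Q x' y)) := by
            refine Finset.sum_congr rfl fun x _ => ?_
            rw [Finset.mul_sum, Finset.mul_sum, ← Finset.sum_sub_distrib]
            exact Finset.sum_congr rfl fun x' _ => by ring
        _ = (∑ x, fp x * Q x y) * (∑ x', fm x')
              - (∑ x, fp x) * (∑ x', fm x' * Q x' y) := by
            rw [Finset.sum_sub_distrib, ← Finset.sum_mul, ← Finset.sum_mul]
    rw [step, hsumfm, hsumfp]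
    have hsplit : ∑ x, Q x y * f x = (∑ x, fp x * Q x y) - (∑ x, fm x * Q x y) := by
      rw [← Finset.sum_sub_distrib]
      exact Finset.sum_congr rfl (fun x _ => by rw [hfpm x]; ring)
    rw [hsplit]
    have e2 : ∑ x', fm x' * Q x' y = ∑ x, fm x * Q x y := rfl
    rw [e2]; ring
  -- bound per y
  have hb : ∀ y, s * |∑ x, Q x y * f x|
      ≤ ∑ x, ∑ x', fp x * fm x' * |Q x y - Q x' y| := by
    intro y
    calc s * |∑ x, Q x y * f x| = |s * (∑ x, Q x y * f x)| := by
          rw [abs_mul, abs_of_nonneg hsnn]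
      _ = |∑ x, ∑ x', fp x * fm x' * (Q x y - Q x' y)| := by rw [hid y]
      _ ≤ ∑ x, ∑ x', |fp x * fm x' * (Q x y - Q x' y)| := by
          refine (Finset.abs_sum_le_sum_abs _ _).trans ?_
          exact Finset.sum_le_sum (fun x _ => Finset.abs_sum_le_sum_abs _ _)
      _ = ∑ x, ∑ x', fp x * fm x' * |Q x y - Q x' y| := by
          refine Finset.sum_congr rfl (fun x _ => Finset.sum_congr rfl (fun x' _ => ?_))
          rw [abs_mul, abs_of_nonneg (mul_nonneg (hfpnn x) (hfmnn x'))]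
  -- sum over y
  have hmain : s * ∑ y, |∑ x, Q x y * f x| ≤ 2 * k * s * s := by
    calc s * ∑ y, |∑ x, Q x y * f x| = ∑ y, s * |∑ x, Q x y * f x| := by
          rw [Finset.mul_sum]
      _ ≤ ∑ y, ∑ x, ∑ x', fp x * fm x' * |Q x y - Q x' y| :=
          Finset.sum_le_sum (fun y _ => hb y)
      _ = ∑ x, ∑ x', fp x * fm x' * ∑ y, |Q x y - Q x' y| := by
          rw [Finset.sum_comm]
          refine Finset.sum_congr rfl (fun x _ => ?_)
          rw [Finset.sum_comm]
          exact Finset.sum_congr rfl (fun x' _ => by rw [Finset.mul_sum])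
      _ ≤ ∑ x, ∑ x', fp x * fm x' * (2 * k) := by
          refine Finset.sum_le_sum (fun x _ => Finset.sum_le_sum (fun x' _ => ?_))
          exact mul_le_mul_of_nonneg_left (hrow x x') (mul_nonneg (hfpnn x) (hfmnn x'))
      _ = 2 * k * s * s := by
          have hx : ∀ x, ∑ x', fp x * fm x' * (2 * k) = fp x * (s * (2 * k)) := by
            intro x
            calc ∑ x', fp x * fm x' * (2 * k)
                = ∑ x', fp x * (fm x' * (2 * k)) :=
                  Finset.sum_congr rfl (fun _ _ => by ring)
              _ = fp x * ∑ x', fm x' * (2 * k) := by rw [Finset.mul_sum]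
              _ = fp x * ((∑ x', fm x') * (2 * k)) := by rw [Finset.sum_mul]
              _ = fp x * (s * (2 * k)) := by rw [hsumfm]
          rw [Finset.sum_congr rfl (fun x _ => hx x), ← Finset.sum_mul, hsumfp]
          ring
  have hLHS : (1/2) * ∑ y, |(∑ x, Q x y * P₀ x) - (∑ x, Q x y * P₁ x)|
      = (1/2) * ∑ y, |∑ x, Q x y * f x| := by
    congr 1
    exact Finset.sum_congr rfl (fun y _ => by rw [hgoal_eq y])
  rw [hLHS]
  rcases eq_or_lt_of_le hsnn with hs0 | hspos
  · have hfz : ∀ x, f x = 0 := by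
      intro x
      have hall : ∑ x, |f x| = 0 := by
        rw [hsdef] at hs0; linarith
      have := (Finset.sum_eq_zero_iff_of_nonneg
        (fun x _ => abs_nonneg (f x))).mp hall x (Finset.mem_univ x)
      exact abs_eq_zero.mp this
    have hz : ∑ y, |∑ x, Q x y * f x| = 0 := by
      refine Finset.sum_eq_zero (fun y _ => ?_)
      rw [Finset.sum_eq_zero (fun x _ => by rw [hfz x, mul_zero]), abs_zero]
    rw [hz, ← hs0]
    simp
  · have h2 : ∑ y, |∑ x, Q x y * f x| ≤ 2 * k * s := by
      have := (mul_le_mul_iff_right₀ hspos).mp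
        (by linarith [hmain] : s * ∑ y, |∑ x, Q x y * f x| ≤ s * (2 * k * s))
      linarith
    linarith
end

section
/- Let P₀, P₁ be probability distributions on a finite set X, let T = {x : P₀(x) ≥ P₁(x)}, and let Q be the binary mechanism with outputs {0,1} defined by Q(0|x) = e^ε/(1+e^ε) if x ∈ T and 1/(1+e^ε) otherwise, and Q(1|x) = 1 − Q(0|x). Then the induced output distributions satisfy ‖M₀ − M₁‖_TV = ((e^ε − 1)/(e^ε + 1)) ‖P₀ − P₁‖_TV. -/
open Real Finset

/-- The binary mechanism achieves total variation
`((e^ε−1)/(e^ε+1))‖P₀−P₁‖_TV` between the induced marginals. -/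
theorem binary_mechanism_tv
    {X : Type*} [Fintype X]
    (ε : ℝ) (hε : 0 ≤ ε)
    (P₀ P₁ : X → ℝ)
    (hP₀ : ∀ x, 0 ≤ P₀ x) (hP₁ : ∀ x, 0 ≤ P₁ x)
    (hP₀sum : ∑ x, P₀ x = 1) (hP₁sum : ∑ x, P₁ x = 1)
    (Q : X → Fin 2 → ℝ)
    (hQ0 : ∀ x, Q x 0 = if P₁ x ≤ P₀ x then Real.exp ε / (1 + Real.exp ε)
                        else 1 / (1 + Real.exp ε))
    (hQ1 : ∀ x, Q x 1 = 1 - Q x 0) :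
    (1/2) * ∑ y, |(∑ x, Q x y * P₀ x) - (∑ x, Q x y * P₁ x)| =
      ((Real.exp ε - 1) / (Real.exp ε + 1)) * ((1/2) * ∑ x, |P₀ x - P₁ x|) := by
  set a := Real.exp ε with ha
  have ha1 : 1 ≤ a := Real.one_le_exp hε
  have hapos : (0:ℝ) < 1 + a := by linarith
  have hsum0 : ∑ x, (P₀ x - P₁ x) = 0 := by
    rw [Finset.sum_sub_distrib, hP₀sum, hP₁sum]; ring
  set T := Finset.univ.filter (fun x => P₁ x ≤ P₀ x) with hT
  set D := ∑ x ∈ T, (P₀ x - P₁ x) with hD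
  have hDnn : 0 ≤ D := Finset.sum_nonneg (fun x hx => by
    simp only [hT, Finset.mem_filter] at hx; linarith [hx.2])
  have key : ∀ x, Q x 0 * (P₀ x - P₁ x)
      = (1/(1+a)) * (P₀ x - P₁ x)
        + ((a-1)/(1+a)) * (if P₁ x ≤ P₀ x then P₀ x - P₁ x else 0) := by
    intro x
    rw [hQ0]
    by_cases h : P₁ x ≤ P₀ x <;> simp only [h, if_pos, if_neg, not_false_iff,
      if_true, if_false] <;> field_simp <;> ring
  have hdiff : (∑ x, Q x 0 * P₀ x) - (∑ x, Q x 0 * P₁ x) = ((a - 1)/(1 + a)) * D := by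
    rw [← Finset.sum_sub_distrib]
    have : ∀ x ∈ Finset.univ, Q x 0 * P₀ x - Q x 0 * P₁ x = Q x 0 * (P₀ x - P₁ x) :=
      fun x _ => by ring
    rw [Finset.sum_congr rfl this]
    simp_rw [key]
    rw [Finset.sum_add_distrib, ← Finset.mul_sum, ← Finset.mul_sum, hsum0,
      ← Finset.sum_filter, ← hT, ← hD]
    ring
  have hdiff1 : (∑ x, Q x 1 * P₀ x) - (∑ x, Q x 1 * P₁ x) = -(((a - 1)/(1 + a)) * D) := by
    have h0 : ∀ x ∈ Finset.univ, Q x 1 * P₀ x = P₀ x - Q x 0 * P₀ x :=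
      fun x _ => by rw [hQ1]; ring
    have h1 : ∀ x ∈ Finset.univ, Q x 1 * P₁ x = P₁ x - Q x 0 * P₁ x :=
      fun x _ => by rw [hQ1]; ring
    rw [Finset.sum_congr rfl h0, Finset.sum_congr rfl h1,
      Finset.sum_sub_distrib, Finset.sum_sub_distrib, hP₀sum, hP₁sum]
    rw [← hdiff]; ring
  have habs : ∑ x, |P₀ x - P₁ x| = 2 * D := by
    have : ∀ x ∈ Finset.univ, |P₀ x - P₁ x|
        = (if P₁ x ≤ P₀ x then P₀ x - P₁ x else 0) * 2 - (P₀ x - P₁ x) := by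
      intro x _
      by_cases h : P₁ x ≤ P₀ x
      · rw [if_pos h, abs_of_nonneg (by linarith)]; ring
      · rw [if_neg h, abs_of_neg (by linarith [not_le.mp h])]; ring
    rw [Finset.sum_congr rfl this, Finset.sum_sub_distrib, hsum0,
      ← Finset.sum_mul, ← Finset.sum_filter, ← hT, ← hD]
    ring
  rw [Fin.sum_univ_two, hdiff, hdiff1, habs, abs_neg,
    abs_of_nonneg (mul_nonneg (div_nonneg (by linarith) (by linarith)) hDnn)]
  ring
end

section
/- Let P₀, P₁ be probability distributions on a finite set X and T = {x : P₀(x) ≥ P₁(x)}. For any vector s ∈ {1, e^ε}^X, ((e^ε−1)/(e^ε+1)) Σ_x |P₀(x)−P₁(x)| s(x) ≥ |Σ_x (P₀(x)−P₁(x)) s(x)|. -/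
open Real Finset

/-- Dual feasibility for the TV linear program: for any staircase pattern
`s ∈ {1, e^ε}^X`,
`((e^ε−1)/(e^ε+1)) Σ_x |P₀(x)−P₁(x)| s(x) ≥ |Σ_x (P₀(x)−P₁(x)) s(x)|`. -/
theorem tv_dual_feasibility
    {X : Type*} [Fintype X]
    (ε : ℝ) (hε : 0 ≤ ε)
    (P₀ P₁ : X → ℝ)
    (hP₀ : ∀ x, 0 ≤ P₀ x) (hP₁ : ∀ x, 0 ≤ P₁ x)
    (hP₀sum : ∑ x, P₀ x = 1) (hP₁sum : ∑ x, P₁ x = 1)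
    (s : X → ℝ) (hs : ∀ x, s x = 1 ∨ s x = Real.exp ε) :
    |∑ x, (P₀ x - P₁ x) * s x| ≤
      ((Real.exp ε - 1) / (Real.exp ε + 1)) * ∑ x, |P₀ x - P₁ x| * s x := by
  set E := Real.exp ε with hE
  have hE1 : 1 ≤ E := Real.one_le_exp hε
  have hEpos : (0:ℝ) < E + 1 := by linarith
  set c : ℝ := (E - 1) / (E + 1) with hc
  set t : ℝ := 2 * E / (E + 1) with ht
  have hsum0 : ∑ x, (P₀ x - P₁ x) = 0 := by
    rw [Finset.sum_sub_distrib, hP₀sum, hP₁sum]; ring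
  have hshift : ∑ x, (P₀ x - P₁ x) * s x = ∑ x, (P₀ x - P₁ x) * (s x - t) := by
    have : ∑ x, (P₀ x - P₁ x) * (s x - t)
        = ∑ x, (P₀ x - P₁ x) * s x - (∑ x, (P₀ x - P₁ x)) * t := by
      rw [Finset.sum_mul, ← Finset.sum_sub_distrib]
      congr 1; ext x; ring
    rw [this, hsum0]; ring
  have hpt : ∀ x, |s x - t| = c * s x := by
    intro x
    rcases hs x with h | h <;> rw [h]
    · have : (1:ℝ) - t = -c := by
        rw [ht, hc]; field_simp; ring
      rw [this, abs_neg, abs_of_nonneg, mul_one]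
      exact div_nonneg (by linarith) (by linarith)
    · have : E - t = c * E := by
        rw [ht, hc]; field_simp; ring
      rw [this, abs_of_nonneg]
      exact mul_nonneg (div_nonneg (by linarith) (by linarith)) (by linarith)
  calc |∑ x, (P₀ x - P₁ x) * s x|
      = |∑ x, (P₀ x - P₁ x) * (s x - t)| := by rw [hshift]
    _ ≤ ∑ x, |(P₀ x - P₁ x) * (s x - t)| := Finset.abs_sum_le_sum_abs _ _
    _ = ∑ x, c * (|P₀ x - P₁ x| * s x) := by
        apply Finset.sum_congr rfl; intro x _
        rw [abs_mul, hpt x]; ring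
    _ = c * ∑ x, |P₀ x - P₁ x| * s x := by rw [← Finset.mul_sum]
end

section
/- For any ε ≥ 0 and any pair of probability distributions P₀, P₁ on a finite set, the KL divergence of the induced marginals under the binary mechanism satisfies D_kl(M₀‖M₁) ≥ 2((e^ε−1)/(e^ε+1))² ‖P₀−P₁‖²_TV. -/
open Real Finset
private lemma pinsker_aux (q p : ℝ) (hq0 : 0 < q) (hp1 : p < 1) (hqp : q ≤ p) :
    2*(p-q)^2 ≤ p*(Real.log p - Real.log q) + (1-p)*(Real.log (1-p) - Real.log (1-q)) := by
  set h : ℝ → ℝ := fun t => Real.log t - Real.log q - (Real.log (1-t) - Real.log (1-q)) - 4*(t-q)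
    with hh
  set g : ℝ → ℝ := fun t =>
    t*(Real.log t - Real.log q) + (1-t)*(Real.log (1-t) - Real.log (1-q)) - 2*(t-q)^2 with hg
  have hmem : ∀ t ∈ Set.Icc q p, 0 < t ∧ t < 1 := fun t ht =>
    ⟨lt_of_lt_of_le hq0 ht.1, lt_of_le_of_lt ht.2 hp1⟩
  -- derivative of h
  have hdh : ∀ t : ℝ, 0 < t → t < 1 → HasDerivAt h (1/t + 1/(1-t) - 4) t := by
    intro t ht0 ht1
    have h1t : (0:ℝ) < 1 - t := by linarith
    have d1 : HasDerivAt (fun t : ℝ => Real.log t) (1/t) t := by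
      simpa using Real.hasDerivAt_log ht0.ne'
    have d2 : HasDerivAt (fun t : ℝ => Real.log (1-t)) (-(1/(1-t))) t := by
      have := (Real.hasDerivAt_log h1t.ne').comp t
        ((hasDerivAt_const t (1:ℝ)).sub (hasDerivAt_id t))
      exact this.congr_deriv (by ring)
    have d3 : HasDerivAt (fun t : ℝ => 4*(t-q)) 4 t := by
      simpa using ((hasDerivAt_id t).sub_const q).const_mul 4
    have := (((d1.sub_const (Real.log q)).sub (d2.sub_const (Real.log (1-q)))).sub d3)
    exact this.congr_deriv (by ring)
  -- derivative of g
  have hdg : ∀ t : ℝ, 0 < t → t < 1 → HasDerivAt g (h t) t := by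
    intro t ht0 ht1
    have h1t : (0:ℝ) < 1 - t := by linarith
    have d1 : HasDerivAt (fun t : ℝ => Real.log t) (1/t) t := by
      simpa using Real.hasDerivAt_log ht0.ne'
    have d2 : HasDerivAt (fun t : ℝ => Real.log (1-t)) (-(1/(1-t))) t := by
      have := (Real.hasDerivAt_log h1t.ne').comp t
        ((hasDerivAt_const t (1:ℝ)).sub (hasDerivAt_id t))
      exact this.congr_deriv (by ring)
    have e1 : HasDerivAt (fun t : ℝ => t*(Real.log t - Real.log q))
        (1*(Real.log t - Real.log q) + t*(1/t)) t :=
      (hasDerivAt_id t).mul (d1.sub_const _)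
    have e2 : HasDerivAt (fun t : ℝ => (1-t)*(Real.log (1-t) - Real.log (1-q)))
        ((0-1)*(Real.log (1-t) - Real.log (1-q)) + (1-t)*(-(1/(1-t)))) t :=
      ((hasDerivAt_const t (1:ℝ)).sub (hasDerivAt_id t)).mul (d2.sub_const _)
    have e3 : HasDerivAt (fun t : ℝ => 2*(t-q)^2) (2*(2*(t-q))) t := by
      simpa using (((hasDerivAt_id t).sub_const q).pow 2).const_mul 2
    have := (e1.add e2).sub e3
    refine this.congr_deriv ?_
    have ht : t * (1/t) = 1 := by field_simp
    have h1t' : (1-t) * (-(1/(1-t))) = -1 := by field_simp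
    rw [hh]
    simp only
    rw [ht, h1t']
    ring
  -- h is nonneg on [q,p]
  have hq1 : q < 1 := lt_of_le_of_lt hqp hp1
  have hmono_h : MonotoneOn h (Set.Icc q p) := by
    apply monotoneOn_of_deriv_nonneg (convex_Icc q p)
    · intro t ht
      exact ((hdh t (hmem t ht).1 (hmem t ht).2).continuousAt).continuousWithinAt
    · intro t ht
      rw [interior_Icc] at ht
      have ht' := hmem t (Set.Ioo_subset_Icc_self ht)
      exact ((hdh t ht'.1 ht'.2).differentiableAt).differentiableWithinAt
    · intro t ht
      rw [interior_Icc] at ht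
      have ht' := hmem t (Set.Ioo_subset_Icc_self ht)
      rw [(hdh t ht'.1 ht'.2).deriv]
      have htt : 0 < t * (1-t) := mul_pos ht'.1 (by linarith [ht'.2])
      have hne1 : t ≠ 0 := ht'.1.ne'
      have hne2 : (1:ℝ) - t ≠ 0 := by linarith [ht'.2]
      have : 1/t + 1/(1-t) - 4 = (1-2*t)^2 / (t*(1-t)) := by field_simp; ring
      rw [this]
      positivity
  have hhq : h q = 0 := by simp [hh]
  have hh_nonneg : ∀ t ∈ Set.Icc q p, 0 ≤ h t := by
    intro t ht
    rw [← hhq]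
    exact hmono_h (Set.left_mem_Icc.2 (le_trans hqp le_rfl)) ht ht.1
  -- g monotone on [q,p]
  have hmono_g : MonotoneOn g (Set.Icc q p) := by
    apply monotoneOn_of_deriv_nonneg (convex_Icc q p)
    · intro t ht
      exact ((hdg t (hmem t ht).1 (hmem t ht).2).continuousAt).continuousWithinAt
    · intro t ht
      rw [interior_Icc] at ht
      have ht' := hmem t (Set.Ioo_subset_Icc_self ht)
      exact ((hdg t ht'.1 ht'.2).differentiableAt).differentiableWithinAt
    · intro t ht
      rw [interior_Icc] at ht
      have ht' := hmem t (Set.Ioo_subset_Icc_self ht)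
      rw [(hdg t ht'.1 ht'.2).deriv]
      exact hh_nonneg t (Set.Ioo_subset_Icc_self ht)
  have hgq : g q = 0 := by simp [hg]
  have := hmono_g (Set.left_mem_Icc.2 hqp) (Set.right_mem_Icc.2 hqp) hqp
  rw [hgq, hg] at this
  simp only at this
  linarith

private lemma pinsker_bin (p q : ℝ) (hp0 : 0 < p) (hp1 : p < 1) (hq0 : 0 < q) (hq1 : q < 1) :
    2*(p-q)^2 ≤ p * Real.log (p/q) + (1-p) * Real.log ((1-p)/(1-q)) := by
  rw [Real.log_div hp0.ne' hq0.ne', Real.log_div (by linarith : (1:ℝ)-p ≠ 0) (by linarith : (1:ℝ)-q ≠ 0)]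
  rcases le_total q p with hqp | hpq
  · exact pinsker_aux q p hq0 hp1 hqp
  · have := pinsker_aux (1-q) (1-p) (by linarith) (by linarith) (by linarith)
    simp only [sub_sub_cancel] at this
    nlinarith [this]

/-- Under the binary mechanism, the KL divergence of the induced (binary)
marginals is at least `2((e^ε−1)/(e^ε+1))² ‖P₀−P₁‖²_TV` (Pinsker). -/
theorem binary_mechanism_kl_lower_bound
    {X : Type*} [Fintype X]
    (ε : ℝ) (hε : 0 ≤ ε)
    (P₀ P₁ : X → ℝ)
    (hP₀ : ∀ x, 0 ≤ P₀ x) (hP₁ : ∀ x, 0 ≤ P₁ x)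
    (hP₀sum : ∑ x, P₀ x = 1) (hP₁sum : ∑ x, P₁ x = 1)
    (Q : X → Fin 2 → ℝ)
    (hQ0 : ∀ x, Q x 0 = if P₁ x ≤ P₀ x then Real.exp ε / (1 + Real.exp ε)
                        else 1 / (1 + Real.exp ε))
    (hQ1 : ∀ x, Q x 1 = 1 - Q x 0) :
    2 * ((Real.exp ε - 1) / (Real.exp ε + 1))^2 *
        ((1/2) * ∑ x, |P₀ x - P₁ x|)^2 ≤
      ∑ y, (∑ x, Q x y * P₀ x) *
        Real.log ((∑ x, Q x y * P₀ x) / (∑ x, Q x y * P₁ x)) := by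
  set E := Real.exp ε with hE
  have hE1 : 1 ≤ E := Real.one_le_exp hε
  have hden : (0:ℝ) < 1 + E := by linarith
  set a := E / (1 + E) with ha
  set b := 1 / (1 + E) with hb
  have hb0 : 0 < b := by positivity
  have ha1 : a < 1 := by rw [ha, div_lt_one hden]; linarith
  have hba : b ≤ a := by
    rw [ha, hb, div_le_div_iff₀ hden hden]; nlinarith
  have hQbd : ∀ x, b ≤ Q x 0 ∧ Q x 0 ≤ a := by
    intro x; rw [hQ0 x]
    split
    · exact ⟨hba, le_rfl⟩
    · exact ⟨le_rfl, hba⟩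
  set p := ∑ x, Q x 0 * P₀ x with hp
  set q := ∑ x, Q x 0 * P₁ x with hq
  have hbounds : ∀ (P : X → ℝ), (∀ x, 0 ≤ P x) → (∑ x, P x = 1) →
      b ≤ ∑ x, Q x 0 * P x ∧ ∑ x, Q x 0 * P x ≤ a := by
    intro P hP hPs
    constructor
    · calc b = ∑ x, b * P x := by rw [← Finset.mul_sum, hPs, mul_one]
        _ ≤ ∑ x, Q x 0 * P x :=
          Finset.sum_le_sum fun x _ => mul_le_mul_of_nonneg_right (hQbd x).1 (hP x)
    · calc (∑ x, Q x 0 * P x) ≤ ∑ x, a * P x :=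
          Finset.sum_le_sum fun x _ => mul_le_mul_of_nonneg_right (hQbd x).2 (hP x)
        _ = a := by rw [← Finset.mul_sum, hPs, mul_one]
  obtain ⟨hpb, hpa⟩ := hbounds P₀ hP₀ hP₀sum
  obtain ⟨hqb, hqa⟩ := hbounds P₁ hP₁ hP₁sum
  have hp0 : 0 < p := lt_of_lt_of_le hb0 hpb
  have hp1 : p < 1 := lt_of_le_of_lt hpa ha1
  have hq0' : 0 < q := lt_of_lt_of_le hb0 hqb
  have hq1 : q < 1 := lt_of_le_of_lt hqa ha1
  -- rewrite RHS as binary KL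
  have hs1p : ∑ x, Q x 1 * P₀ x = 1 - p := by
    simp only [hQ1, sub_mul, one_mul]
    rw [Finset.sum_sub_distrib, hP₀sum, hp]
  have hs1q : ∑ x, Q x 1 * P₁ x = 1 - q := by
    simp only [hQ1, sub_mul, one_mul]
    rw [Finset.sum_sub_distrib, hP₁sum, hq]
  rw [Fin.sum_univ_two, hs1p, hs1q]
  -- TV identity
  set S := Finset.univ.filter (fun x => P₁ x ≤ P₀ x) with hS
  set T := ∑ x ∈ S, (P₀ x - P₁ x) with hT
  have hd0 : ∑ x, (P₀ x - P₁ x) = 0 := by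
    rw [Finset.sum_sub_distrib, hP₀sum, hP₁sum]; ring
  have hsplit : ∀ (f : X → ℝ), ∑ x, f x =
      ∑ x ∈ S, f x + ∑ x ∈ Finset.univ.filter (fun x => ¬ P₁ x ≤ P₀ x), f x :=
    fun f => (Finset.sum_filter_add_sum_filter_not Finset.univ _ f).symm
  have hcompl : ∑ x ∈ Finset.univ.filter (fun x => ¬ P₁ x ≤ P₀ x), (P₀ x - P₁ x) = -T := by
    have := hsplit (fun x => P₀ x - P₁ x)
    rw [hd0] at this
    rw [hT]; linarith
  have habs : ∑ x, |P₀ x - P₁ x| = 2 * T := by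
    rw [hsplit (fun x => |P₀ x - P₁ x|)]
    have h1 : ∑ x ∈ S, |P₀ x - P₁ x| = T := by
      rw [hT]
      apply Finset.sum_congr rfl
      intro x hx
      rw [hS, Finset.mem_filter] at hx
      exact abs_of_nonneg (by linarith [hx.2])
    have h2 : ∑ x ∈ Finset.univ.filter (fun x => ¬ P₁ x ≤ P₀ x), |P₀ x - P₁ x| = T := by
      have : ∑ x ∈ Finset.univ.filter (fun x => ¬ P₁ x ≤ P₀ x), |P₀ x - P₁ x|
          = ∑ x ∈ Finset.univ.filter (fun x => ¬ P₁ x ≤ P₀ x), -(P₀ x - P₁ x) := by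
        apply Finset.sum_congr rfl
        intro x hx
        rw [Finset.mem_filter] at hx
        exact abs_of_nonpos (by push_neg at hx; linarith [hx.2])
      rw [this, Finset.sum_neg_distrib, hcompl, neg_neg]
    rw [h1, h2]; ring
  have hpq : p - q = ((E - 1) / (E + 1)) * ((1/2) * ∑ x, |P₀ x - P₁ x|) := by
    have hpq1 : p - q = ∑ x, Q x 0 * (P₀ x - P₁ x) := by
      rw [hp, hq, ← Finset.sum_sub_distrib]
      exact Finset.sum_congr rfl fun x _ => by ring
    have hQS : ∑ x ∈ S, Q x 0 * (P₀ x - P₁ x) = a * T := by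
      rw [hT, Finset.mul_sum]
      apply Finset.sum_congr rfl
      intro x hx
      rw [hS, Finset.mem_filter] at hx
      rw [hQ0 x, if_pos hx.2]
    have hQSc : ∑ x ∈ Finset.univ.filter (fun x => ¬ P₁ x ≤ P₀ x), Q x 0 * (P₀ x - P₁ x)
        = b * (-T) := by
      rw [← hcompl, Finset.mul_sum]
      apply Finset.sum_congr rfl
      intro x hx
      rw [Finset.mem_filter] at hx
      rw [hQ0 x, if_neg hx.2]
    rw [hpq1, hsplit (fun x => Q x 0 * (P₀ x - P₁ x)), hQS, hQSc, habs]
    rw [ha, hb]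
    field_simp
    ring
  have key : 2 * ((E - 1) / (E + 1))^2 * ((1/2) * ∑ x, |P₀ x - P₁ x|)^2
      = 2 * (p - q)^2 := by
    rw [hpq]; ring
  rw [key]
  exact pinsker_bin p q hp0 hp1 hq0' hq1
end

section
/- Let P be a probability distribution on a finite set X with maximum atom p* = max_x P(x). If p* ≤ 1/2, then there exists a subset A ⊂ X with 1/2 − p* ≤ P(A) ≤ 1/2. -/
open Real Finset

/-- If the maximum atom `p* = max_x P(x)` of a distribution `P` on a finite
nonempty set satisfies `p* ≤ 1/2`, there is a subset `A` with
`1/2 − p* ≤ P(A) ≤ 1/2`. -/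
theorem exists_subset_near_half
    {X : Type*} [Fintype X] [Nonempty X]
    (P : X → ℝ) (hP : ∀ x, 0 ≤ P x) (hPsum : ∑ x, P x = 1)
    (hhalf : Finset.univ.sup' Finset.univ_nonempty P ≤ 1/2) :
    ∃ A : Finset X, A ⊂ Finset.univ ∧
      1/2 - Finset.univ.sup' Finset.univ_nonempty P ≤ ∑ x ∈ A, P x ∧
      ∑ x ∈ A, P x ≤ 1/2 := by
  classical
  set S : Finset (Finset X) :=
    (Finset.univ : Finset (Finset X)).filter (fun A => ∑ x ∈ A, P x ≤ 1/2) with hSdef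
  have hSne : S.Nonempty := ⟨∅, by simp [hSdef]⟩
  obtain ⟨A, hA, hmax⟩ :=
    Finset.exists_max_image S (fun A => (∑ x ∈ A, P x) + (A.card : ℝ)) hSne
  have hAle : ∑ x ∈ A, P x ≤ 1/2 := (Finset.mem_filter.mp hA).2
  have hAne : A ≠ Finset.univ := by
    intro h
    rw [h, hPsum] at hAle; linarith
  have hAss : A ⊂ Finset.univ := (Finset.subset_univ A).ssubset_of_ne hAne
  obtain ⟨x, _, hxA⟩ := Finset.exists_of_ssubset hAss
  have hgt : 1/2 < ∑ y ∈ A, P y + P x := by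
    by_contra h
    push_neg at h
    have hmem : insert x A ∈ S := by
      simp only [hSdef, Finset.mem_filter, Finset.mem_univ, true_and,
        Finset.sum_insert hxA]
      linarith
    have hle := hmax _ hmem
    rw [Finset.sum_insert hxA, Finset.card_insert_of_notMem hxA] at hle
    push_cast at hle
    have := hP x
    linarith
  have hpx : P x ≤ Finset.univ.sup' Finset.univ_nonempty P :=
    Finset.le_sup' P (Finset.mem_univ x)
  exact ⟨A, hAss, by linarith, hAle⟩
end

section
/- Let P be a probability distribution on a finite set X with max_x P(x) ≤ 1/2, and let T be a maximizer of P(A)P(A^c) over subsets A ⊆ X with minimal probability among maximizers. Then 1/4 ≤ P(T) ≤ 1/2. -/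
open Real Finset

/-- If all atoms of `P` are at most `1/2` and `T` maximizes `P(A)P(A^c)` with
minimal probability among maximizers, then `1/4 ≤ P(T) ≤ 1/2`. -/
theorem max_product_partition_bounds
    {X : Type*} [Fintype X] [DecidableEq X] [Nonempty X]
    (P : X → ℝ) (hP : ∀ x, 0 ≤ P x) (hPsum : ∑ x, P x = 1)
    (hhalf : ∀ x, P x ≤ 1/2)
    (T : Finset X)
    (hTmax : ∀ A : Finset X,
      (∑ x ∈ A, P x) * (∑ x ∈ Aᶜ, P x) ≤ (∑ x ∈ T, P x) * (∑ x ∈ Tᶜ, P x))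
    (hTmin : ∀ B : Finset X,
      (∀ A : Finset X,
        (∑ x ∈ A, P x) * (∑ x ∈ Aᶜ, P x) ≤ (∑ x ∈ B, P x) * (∑ x ∈ Bᶜ, P x)) →
      ∑ x ∈ T, P x ≤ ∑ x ∈ B, P x) :
    1/4 ≤ ∑ x ∈ T, P x ∧ ∑ x ∈ T, P x ≤ 1/2 := by
  have hcompl : ∀ A : Finset X, ∑ x ∈ Aᶜ, P x = 1 - ∑ x ∈ A, P x := by
    intro A
    have := Finset.sum_add_sum_compl A P
    linarith [this.symm ▸ hPsum]
  set t := ∑ x ∈ T, P x with ht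
  -- upper bound: Tᶜ is also a maximizer
  have hup : t ≤ 1/2 := by
    have h1 : t ≤ ∑ x ∈ Tᶜ, P x := by
      apply hTmin
      intro A
      have h := hTmax A
      rw [hcompl Tᶜ, hcompl T] at *
      nlinarith [h]
    rw [hcompl T] at h1
    linarith
  refine ⟨?_, hup⟩
  -- find a set A with 1/4 ≤ P(A) ≤ 3/4
  have hex : ∃ A : Finset X, 1/4 ≤ ∑ x ∈ A, P x ∧ ∑ x ∈ A, P x ≤ 3/4 := by
    classical
    set F : Finset (Finset X) :=
      Finset.univ.filter (fun A => ∑ x ∈ A, P x ≤ 3/4) with hF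
    have hne : F.Nonempty := ⟨∅, by simp [hF]; norm_num⟩
    obtain ⟨A, hAF, hAmax⟩ := F.exists_max_image (fun A => A.card) hne
    have hA34 : ∑ x ∈ A, P x ≤ 3/4 := by
      simpa [hF] using hAF
    refine ⟨A, ?_, hA34⟩
    by_contra hlt
    push_neg at hlt
    have hAne : A ≠ Finset.univ := by
      intro h
      rw [h, hPsum] at hlt
      norm_num at hlt
    obtain ⟨x, hx⟩ : ∃ x, x ∉ A := by
      by_contra h
      push_neg at h
      exact hAne (Finset.eq_univ_iff_forall.mpr h)
    have hsum : ∑ y ∈ insert x A, P y = P x + ∑ y ∈ A, P y :=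
      Finset.sum_insert hx
    have hmem : insert x A ∈ F := by
      simp only [hF, Finset.mem_filter, Finset.mem_univ, true_and, hsum]
      linarith [hhalf x]
    have := hAmax _ hmem
    have hcard : A.card < (insert x A).card := by
      rw [Finset.card_insert_of_notMem hx]; omega
    omega
  obtain ⟨A, hA1, hA2⟩ := hex
  have h316 : 3/16 ≤ t * (1 - t) := by
    have := hTmax A
    rw [hcompl A, hcompl T] at this
    nlinarith
  nlinarith
end
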